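/- Let G be a balanced bipartite graph on parts of size n with minimum degree at least δn where 0 ≤ δ ≤ 2/3. Then in every 2-coloring of the edges of G there exists a monochromatic connected matching of size at least δn/2, i.e., a matching of at least δn/2 edges all lying in a single monochromatic component. -/

import Mathlib

section Auxiliary

open Finset
open scoped Classical

lemma konig_rel (n : ℕ) (r : Fin n → Fin n → Prop) :
    ∃ (M : Finset (Fin n × Fin n)) (SA SB : Finset (Fin n)),
      (∀ p ∈ M, r p.1 p.2) ∧
      (∀ p ∈ M, ∀ q ∈ M, p ≠ q → p.1 ≠ q.1 ∧ p.2 ≠ q.2) ∧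
      (∀ a b, r a b → a ∈ SA ∨ b ∈ SB) ∧
      SA.card + SB.card ≤ M.card := by
  classical
  set N : Finset (Fin n) → Finset (Fin n) :=
    fun s => s.biUnion (fun a => univ.filter (fun b => r a b)) with hNdef
  obtain ⟨A, hA, hmax⟩ := exists_max_image (univ.powerset (α := Fin n))
    (fun s => s.card + ((N s)ᶜ).card) ⟨∅, by simp⟩
  have hg0 : n ≤ A.card + ((N A)ᶜ).card := by
    have := hmax ∅ (by simp)
    simpa [N, card_univ] using this
  set d : ℕ := A.card + ((N A)ᶜ).card - n with hddef
  have hdn : A.card + ((N A)ᶜ).card = n + d := by omega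
  have hHallN : ∀ s : Finset (Fin n), s.card ≤ (N s).card + d := by
    intro s
    have h1 : s.card + ((N s)ᶜ).card ≤ n + d := by
      rw [← hdn]; exact hmax s (by simp)
    have h2 : ((N s)ᶜ).card = n - (N s).card := by
      rw [card_compl]; simp
    have h3 : (N s).card ≤ n := by
      simpa using card_le_card (subset_univ (N s))
    omega
  set t : Fin n → Finset (Fin n ⊕ Fin d) := fun a =>
    ((univ.filter (fun b => r a b)).map ⟨Sum.inl, Sum.inl_injective⟩) ∪
      ((univ : Finset (Fin d)).map ⟨Sum.inr, Sum.inr_injective⟩) with htdef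
  have hHall : ∀ s : Finset (Fin n), s.card ≤ (s.biUnion t).card := by
    intro s
    rcases s.eq_empty_or_nonempty with rfl | hs
    · simp
    · have heq : s.biUnion t =
          ((N s).map ⟨Sum.inl, Sum.inl_injective⟩) ∪
            ((univ : Finset (Fin d)).map ⟨Sum.inr, Sum.inr_injective⟩) := by
        ext x
        cases x with
        | inl b => simp [t, N]
        | inr j =>
          simp only [mem_biUnion, mem_union, mem_map, Function.Embedding.coeFn_mk,
            mem_filter, mem_univ, true_and, N, t]
          constructor
          · intro _; exact Or.inr ⟨j, by simp⟩
          · intro _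
            obtain ⟨a, ha⟩ := hs
            exact ⟨a, ha, Or.inr ⟨j, by simp⟩⟩
      rw [heq, card_union_of_disjoint, card_map, card_map]
      · exact le_trans (hHallN s) (by simp)
      · simp [disjoint_left]
  obtain ⟨f, hfinj, hf⟩ := (Finset.all_card_le_biUnion_card_iff_exists_injective t).mp hHall
  set M : Finset (Fin n × Fin n) :=
    univ.biUnion (fun a => Sum.rec (fun b => {(a, b)}) (fun _ => (∅ : Finset (Fin n × Fin n))) (f a))
    with hMdef
  have hmem : ∀ p : Fin n × Fin n, p ∈ M ↔ f p.1 = Sum.inl p.2 := by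
    intro p
    constructor
    · intro hp
      rw [hMdef, mem_biUnion] at hp
      obtain ⟨a, -, hx⟩ := hp
      cases h : f a with
      | inl b =>
        rw [h] at hx
        simp only [mem_singleton] at hx
        subst hx; simpa using h
      | inr j => rw [h] at hx; simp at hx
    · intro hp
      rw [hMdef, mem_biUnion]
      exact ⟨p.1, mem_univ _, by rw [hp]; simp⟩
  -- M.card ≥ n - d
  have hcount : n ≤ M.card + d := by
    have hMcard : M.card = (univ.filter (fun a => (f a).isLeft)).card := by
      rw [hMdef, card_biUnion]
      · rw [card_filter]
        apply sum_congr rfl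
        intro a _
        rcases h : f a with b | j <;> simp
      · intro a _ b _ hab
        simp only [disjoint_left]
        intro p hp hq
        cases h1 : f a <;> rw [h1] at hp <;> simp at hp
        cases h2 : f b <;> rw [h2] at hq <;> simp at hq
        rw [hp] at hq
        exact hab (congrArg Prod.fst hq)
    have hright : (univ.filter (fun a => ¬ (f a).isLeft)).card ≤ d := by
      have himg : (univ.filter (fun a => ¬ (f a).isLeft)).card
          = ((univ.filter (fun a => ¬ (f a).isLeft)).image f).card := by
        rw [card_image_of_injective _ hfinj]
      rw [himg]
      have hsub : (univ.filter (fun a => ¬ (f a).isLeft)).image f ⊆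
          (univ : Finset (Fin d)).map ⟨Sum.inr, Sum.inr_injective⟩ := by
        intro x hx
        simp only [mem_image, mem_filter, mem_univ, true_and] at hx
        obtain ⟨a, ha, rfl⟩ := hx
        rcases h : f a with b | j
        · rw [h] at ha; simp at ha
        · simp
      simpa using card_le_card hsub
    have hsplit : (univ.filter (fun a => (f a).isLeft)).card
        + (univ.filter (fun a => ¬ (f a).isLeft)).card = n := by
      rw [card_filter_add_card_filter_not]
      simp
    omega
  refine ⟨M, Aᶜ, N A, ?_, ?_, ?_, ?_⟩
  · intro p hp
    have h := hf p.1
    rw [(hmem p).mp hp] at h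
    simp only [t, mem_union, mem_map, mem_filter, mem_univ, true_and,
      Function.Embedding.coeFn_mk] at h
    rcases h with ⟨b, hb, hbe⟩ | ⟨j, hj⟩
    · rwa [← Sum.inl_injective hbe]
    · simp at hj
  · intro p hp q hq hpq
    have h1 := (hmem p).mp hp
    have h2 := (hmem q).mp hq
    constructor
    · intro he
      apply hpq
      have : (Sum.inl p.2 : Fin n ⊕ Fin d) = Sum.inl q.2 := by rw [← h1, ← h2, he]
      exact Prod.ext he (Sum.inl_injective this)
    · intro he
      apply hpq
      have : f p.1 = f q.1 := by rw [h1, h2, he]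
      exact Prod.ext (hfinj this) he
  · intro a b hab
    by_cases ha : a ∈ A
    · exact Or.inr (by rw [hNdef]; exact mem_biUnion.mpr ⟨a, ha, by simp [hab]⟩)
    · exact Or.inl (by simpa using ha)
  · have hc1 : (Aᶜ).card = n - A.card := by rw [card_compl]; simp
    have hc2 : A.card ≤ n := by simpa using card_le_card (subset_univ A)
    have hc3 : ((N A)ᶜ).card = n - (N A).card := by rw [card_compl]; simp
    have hc4 : (N A).card ≤ n := by simpa using card_le_card (subset_univ (N A))
    omega

lemma color_analysis {n : ℕ} (m : ℝ) (H : SimpleGraph (Fin n ⊕ Fin n))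
    (hb : H ≤ completeBipartiteGraph (Fin n) (Fin n))
    (hsmall : ∀ Mc : Finset (Fin n × Fin n),
      (∀ p ∈ Mc, H.Adj (Sum.inl p.1) (Sum.inr p.2)) →
      (∀ p ∈ Mc, ∀ q ∈ Mc, p ≠ q → p.1 ≠ q.1 ∧ p.2 ≠ q.2) →
      (∀ p ∈ Mc, ∀ q ∈ Mc, H.Reachable (Sum.inl p.1) (Sum.inl q.1)) →
      (Mc.card : ℝ) < m) :
    ∃ P : Finset (Fin n ⊕ Fin n),
      P.card ≤ n ∧
      (∀ v, v ∉ P → ((Finset.univ.filter (fun u => H.Adj v u)).card : ℝ) < m) ∧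
      (∀ c : H.ConnectedComponent,
        ((P.filter (fun v => H.connectedComponentMk v = c)).card : ℝ) < m) := by
  classical
  have hbipadj : ∀ (a : Fin n) (u : Fin n ⊕ Fin n), H.Adj (Sum.inl a) u → ∃ b, u = Sum.inr b := by
    intro a u hadj
    have := hb hadj
    cases u with
    | inl b => simp [completeBipartiteGraph] at this
    | inr b => exact ⟨b, rfl⟩
  have hbipadj' : ∀ (b : Fin n) (u : Fin n ⊕ Fin n), H.Adj (Sum.inr b) u → ∃ a, u = Sum.inl a := by
    intro b u hadj
    have := hb hadj
    cases u with
    | inl a => exact ⟨a, rfl⟩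
    | inr a => simp [completeBipartiteGraph] at this
  choose M SA SB hMr hMd hcov hcard using
    (fun c : H.ConnectedComponent =>
      konig_rel n (fun a b => H.Adj (Sum.inl a) (Sum.inr b) ∧
        H.connectedComponentMk (Sum.inl a) = c))
  -- each M c is small
  have hMsmall : ∀ c, ((M c).card : ℝ) < m := by
    intro c
    apply hsmall (M c) (fun p hp => (hMr c p hp).1) (hMd c)
    intro p hp q hq
    exact SimpleGraph.ConnectedComponent.exact
      (((hMr c p hp).2).trans ((hMr c q hq).2).symm)
  have hScard : ∀ c, ((SA c).card : ℝ) + ((SB c).card : ℝ) < m := by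
    intro c
    have h2 := hMsmall c
    have h1 := hcard c
    push_cast
    have : ((SA c).card + (SB c).card : ℝ) ≤ ((M c).card : ℝ) := by exact_mod_cast h1
    linarith
  -- the cover set
  set P : Finset (Fin n ⊕ Fin n) := Finset.univ.filter (fun v =>
    Sum.elim (fun a => a ∈ SA (H.connectedComponentMk (Sum.inl a)))
      (fun b => b ∈ SB (H.connectedComponentMk (Sum.inr b))) v) with hPdef
  -- per-fiber bound
  have hfiber : ∀ c : H.ConnectedComponent,
      (P.filter (fun v => H.connectedComponentMk v = c)) ⊆
        ((SA c).map ⟨Sum.inl, Sum.inl_injective⟩) ∪ ((SB c).map ⟨Sum.inr, Sum.inr_injective⟩) := by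
    intro c v hv
    rw [mem_filter] at hv
    obtain ⟨hvP, hvc⟩ := hv
    rw [hPdef, mem_filter] at hvP
    cases v with
    | inl a =>
      apply mem_union_left
      simp only [mem_map, Function.Embedding.coeFn_mk]
      exact ⟨a, by rw [← hvc]; exact hvP.2, rfl⟩
    | inr b =>
      apply mem_union_right
      simp only [mem_map, Function.Embedding.coeFn_mk]
      exact ⟨b, by rw [← hvc]; exact hvP.2, rfl⟩
  have hfibercard : ∀ c : H.ConnectedComponent,
      (P.filter (fun v => H.connectedComponentMk v = c)).card ≤ (M c).card := by
    intro c
    calc (P.filter (fun v => H.connectedComponentMk v = c)).card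
        ≤ (((SA c).map ⟨Sum.inl, Sum.inl_injective⟩) ∪
            ((SB c).map ⟨Sum.inr, Sum.inr_injective⟩)).card := card_le_card (hfiber c)
      _ ≤ (SA c).card + (SB c).card := by
          refine le_trans (card_union_le _ _) ?_
          rw [card_map, card_map]
      _ ≤ (M c).card := hcard c
  refine ⟨P, ?_, ?_, ?_⟩
  · -- P.card ≤ n
    have hsum : P.card = ∑ c : H.ConnectedComponent,
        (P.filter (fun v => H.connectedComponentMk v = c)).card :=
      card_eq_sum_card_fiberwise (fun v _ => mem_univ _)
    have himg : ∀ c, (M c).card = ((M c).image Prod.fst).card := by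
      intro c
      rw [card_image_of_injOn]
      intro p hp q hq hpq
      by_contra hne
      exact (hMd c p hp q hq hne).1 hpq
    have hdisj : ∀ c ∈ (Finset.univ : Finset H.ConnectedComponent),
        ∀ c' ∈ (Finset.univ : Finset H.ConnectedComponent), c ≠ c' →
        Disjoint ((M c).image Prod.fst) ((M c').image Prod.fst) := by
      intro c _ c' _ hcc
      rw [disjoint_left]
      intro a ha ha'
      simp only [mem_image] at ha ha'
      obtain ⟨p, hp, hp1⟩ := ha
      obtain ⟨q, hq, hq1⟩ := ha'
      apply hcc
      rw [← (hMr c p hp).2, ← (hMr c' q hq).2, hp1, hq1]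
    calc P.card = ∑ c : H.ConnectedComponent,
          (P.filter (fun v => H.connectedComponentMk v = c)).card := hsum
      _ ≤ ∑ c : H.ConnectedComponent, ((M c).image Prod.fst).card := by
          apply sum_le_sum
          intro c _
          rw [← himg c]
          exact hfibercard c
      _ = (Finset.univ.biUnion (fun c : H.ConnectedComponent => (M c).image Prod.fst)).card :=
          (card_biUnion hdisj).symm
      _ ≤ (Finset.univ : Finset (Fin n)).card := card_le_card (subset_univ _)
      _ = n := by simp
  · -- degree bound outside P
    intro v hv
    rw [hPdef, mem_filter] at hv
    push_neg at hv
    have hv' := hv (mem_univ v)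
    cases v with
    | inl a =>
      simp only [Sum.elim_inl] at hv'
      set c := H.connectedComponentMk (Sum.inl a) with hc
      have hsub : Finset.univ.filter (fun u => H.Adj (Sum.inl a) u) ⊆
          (SB c).map ⟨Sum.inr, Sum.inr_injective⟩ := by
        intro u hu
        rw [mem_filter] at hu
        obtain ⟨b, rfl⟩ := hbipadj a u hu.2
        have := hcov c a b ⟨hu.2, rfl⟩
        rcases this with h | h
        · exact absurd h hv'
        · simp only [mem_map, Function.Embedding.coeFn_mk]; exact ⟨b, h, rfl⟩
      have h1 : (Finset.univ.filter (fun u => H.Adj (Sum.inl a) u)).card ≤ (SB c).card := by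
        refine le_trans (card_le_card hsub) ?_
        rw [card_map]
      have h2 := hScard c
      have h3 : (0:ℝ) ≤ ((SA c).card : ℝ) := by positivity
      have : (((Finset.univ.filter (fun u => H.Adj (Sum.inl a) u)).card : ℝ)) ≤ ((SB c).card : ℝ) := by
        exact_mod_cast h1
      linarith
    | inr b =>
      simp only [Sum.elim_inr] at hv'
      set c := H.connectedComponentMk (Sum.inr b) with hc
      have hsub : Finset.univ.filter (fun u => H.Adj (Sum.inr b) u) ⊆
          (SA c).map ⟨Sum.inl, Sum.inl_injective⟩ := by
        intro u hu
        rw [mem_filter] at hu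
        obtain ⟨a, rfl⟩ := hbipadj' b u hu.2
        have hadj : H.Adj (Sum.inl a) (Sum.inr b) := hu.2.symm
        have hcc : H.connectedComponentMk (Sum.inl a) = c := by
          rw [hc]
          exact SimpleGraph.ConnectedComponent.connectedComponentMk_eq_of_adj hadj
        have := hcov c a b ⟨hadj, hcc⟩
        rcases this with h | h
        · simp only [mem_map, Function.Embedding.coeFn_mk]; exact ⟨a, h, rfl⟩
        · exact absurd h hv'
      have h1 : (Finset.univ.filter (fun u => H.Adj (Sum.inr b) u)).card ≤ (SA c).card := by
        refine le_trans (card_le_card hsub) ?_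
        rw [card_map]
      have h2 := hScard c
      have h3 : (0:ℝ) ≤ ((SB c).card : ℝ) := by positivity
      have : (((Finset.univ.filter (fun u => H.Adj (Sum.inr b) u)).card : ℝ)) ≤ ((SA c).card : ℝ) := by
        exact_mod_cast h1
      linarith
  · -- fiber cardinality bound
    intro c
    have h1 := hfibercard c
    have h2 := hMsmall c
    have : ((P.filter (fun v => H.connectedComponentMk v = c)).card : ℝ) ≤ ((M c).card : ℝ) := by
      exact_mod_cast h1
    linarith

end Auxiliary

open SimpleGraph Set

/-- `M` is a connected matching in the graph `K`: a set of pairwise vertex-disjoint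
edges of `K`, all lying in the same connected component of `K`. -/
def IsConnectedMatching {V : Type*} (K : SimpleGraph V) (M : Finset (V × V)) : Prop :=
  (∀ p ∈ M, K.Adj p.1 p.2) ∧
  (∀ p ∈ M, ∀ q ∈ M, p ≠ q → p.1 ≠ q.1 ∧ p.1 ≠ q.2 ∧ p.2 ≠ q.1 ∧ p.2 ≠ q.2) ∧
  (∀ p ∈ M, ∀ q ∈ M, K.Reachable p.1 q.1)

/-- Monochromatic connected matching in a 2-colored balanced bipartite graph. -/
theorem mono_connected_matching_low_degree (n : ℕ) (δ : ℝ) (hlo : (0 : ℝ) ≤ δ) (hhi : δ ≤ (2/3 : ℝ))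
    (G R B : SimpleGraph (Fin n ⊕ Fin n))
    (hbip : G ≤ completeBipartiteGraph (Fin n) (Fin n))
    (hcol : R ⊔ B = G)
    (hdeg : ∀ v, δ * n ≤ ((G.neighborSet v).ncard : ℝ)) :
    ∃ (K : SimpleGraph (Fin n ⊕ Fin n)), (K = R ∨ K = B) ∧
      ∃ M : Finset ((Fin n ⊕ Fin n) × (Fin n ⊕ Fin n)),
        IsConnectedMatching K M ∧ δ * n / 2 ≤ (M.card : ℝ) := by
  classical
  by_cases hn : δ * n / 2 ≤ 0
  · refine ⟨R, Or.inl rfl, ∅, ?_, by simpa using hn⟩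
    refine ⟨?_, ?_, ?_⟩ <;> intro p hp <;> simp at hp
  push_neg at hn
  by_contra hcon
  push_neg at hcon
  -- translate the no-matching hypothesis for each colour
  have hsmall : ∀ K : SimpleGraph (Fin n ⊕ Fin n), (K = R ∨ K = B) →
      ∀ Mc : Finset (Fin n × Fin n),
      (∀ p ∈ Mc, K.Adj (Sum.inl p.1) (Sum.inr p.2)) →
      (∀ p ∈ Mc, ∀ q ∈ Mc, p ≠ q → p.1 ≠ q.1 ∧ p.2 ≠ q.2) →
      (∀ p ∈ Mc, ∀ q ∈ Mc, K.Reachable (Sum.inl p.1) (Sum.inl q.1)) →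
      (Mc.card : ℝ) < δ * n / 2 := by
    intro K hK Mc h1 h2 h3
    have hinj : Function.Injective
        (fun p : Fin n × Fin n => ((Sum.inl p.1 : Fin n ⊕ Fin n), (Sum.inr p.2 : Fin n ⊕ Fin n))) := by
      intro p q hpq
      simp only [Prod.mk.injEq, Sum.inl.injEq, Sum.inr.injEq] at hpq
      exact Prod.ext hpq.1 hpq.2
    set M : Finset ((Fin n ⊕ Fin n) × (Fin n ⊕ Fin n)) :=
      Mc.map ⟨_, hinj⟩ with hMdef
    have hmemM : ∀ q ∈ M, ∃ p ∈ Mc, q = (Sum.inl p.1, Sum.inr p.2) := by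
      intro q hq
      rw [hMdef, Finset.mem_map] at hq
      obtain ⟨p, hp, rfl⟩ := hq
      exact ⟨p, hp, rfl⟩
    have hicm : IsConnectedMatching K M := by
      refine ⟨?_, ?_, ?_⟩
      · intro p hp
        obtain ⟨p', hp', rfl⟩ := hmemM p hp
        exact h1 p' hp'
      · intro p hp q hq hpq
        obtain ⟨p', hp', rfl⟩ := hmemM p hp
        obtain ⟨q', hq', rfl⟩ := hmemM q hq
        have hne : p' ≠ q' := by
          intro h; exact hpq (by rw [h])
        obtain ⟨hd1, hd2⟩ := h2 p' hp' q' hq' hne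
        refine ⟨by simp [hd1], by simp, by simp, by simp [hd2]⟩
      · intro p hp q hq
        obtain ⟨p', hp', rfl⟩ := hmemM p hp
        obtain ⟨q', hq', rfl⟩ := hmemM q hq
        exact h3 p' hp' q' hq'
    have := hcon K hK M hicm
    rwa [hMdef, Finset.card_map] at this
  have hRG : R ≤ G := by rw [← hcol]; exact le_sup_left
  have hBG : B ≤ G := by rw [← hcol]; exact le_sup_right
  obtain ⟨PR, hPRn, hPRdeg, hPRfib⟩ :=
    color_analysis (δ * n / 2) R (hRG.trans hbip) (hsmall R (Or.inl rfl))
  obtain ⟨PB, hPBn, hPBdeg, hPBfib⟩ :=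
    color_analysis (δ * n / 2) B (hBG.trans hbip) (hsmall B (Or.inr rfl))
  -- degree in Finset terms
  have hdegF : ∀ v, δ * n ≤ ((Finset.univ.filter (fun u => G.Adj v u)).card : ℝ) := by
    intro v
    have h := hdeg v
    have : (G.neighborSet v).ncard = (Finset.univ.filter (fun u => G.Adj v u)).card := by
      rw [← Set.ncard_coe_finset]
      congr 1
      ext u
      simp [SimpleGraph.mem_neighborSet]
    rwa [this] at h
  have hsplitdeg : ∀ v, ((Finset.univ.filter (fun u => G.Adj v u)).card : ℝ) ≤
      ((Finset.univ.filter (fun u => R.Adj v u)).card : ℝ) +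
      ((Finset.univ.filter (fun u => B.Adj v u)).card : ℝ) := by
    intro v
    have hsub : Finset.univ.filter (fun u => G.Adj v u) ⊆
        Finset.univ.filter (fun u => R.Adj v u) ∪ Finset.univ.filter (fun u => B.Adj v u) := by
      intro u hu
      rw [Finset.mem_filter] at hu
      have : (R ⊔ B).Adj v u := by rw [hcol]; exact hu.2
      rw [SimpleGraph.sup_adj] at this
      rcases this with h | h
      · exact Finset.mem_union_left _ (by simp [h])
      · exact Finset.mem_union_right _ (by simp [h])
    have := le_trans (Finset.card_le_card hsub) (Finset.card_union_le _ _)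
    exact_mod_cast this
  -- every vertex is in PR or PB
  have hcup : ∀ v, v ∈ PR ∨ v ∈ PB := by
    intro v
    by_contra h
    push_neg at h
    have h1 := hPRdeg v h.1
    have h2 := hPBdeg v h.2
    have h3 := hdegF v
    have h4 := hsplitdeg v
    linarith
  have huniv : PR ∪ PB = Finset.univ := by
    apply Finset.eq_univ_of_forall
    intro v
    rcases hcup v with h | h
    · exact Finset.mem_union_left _ h
    · exact Finset.mem_union_right _ h
  have hcard2n : (Finset.univ : Finset (Fin n ⊕ Fin n)).card = 2 * n := by
    simp [Fintype.card_sum]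
    ring
  have hcardsum : (PR ∪ PB).card + (PR ∩ PB).card = PR.card + PB.card :=
    Finset.card_union_add_card_inter _ _
  have hPRcard : PR.card = n ∧ (PR ∩ PB).card = 0 := by
    rw [huniv, hcard2n] at hcardsum
    omega
  have hdisjPP : ∀ v ∈ PR, v ∉ PB := by
    intro v hv hv'
    have : v ∈ PR ∩ PB := Finset.mem_inter.mpr ⟨hv, hv'⟩
    rw [Finset.card_eq_zero.mp hPRcard.2] at this
    simp at this
  -- vertices in PR have large red degree
  have hRdegbig : ∀ v ∈ PR, δ * n / 2 < ((Finset.univ.filter (fun u => R.Adj v u)).card : ℝ) := by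
    intro v hv
    have h2 := hPBdeg v (hdisjPP v hv)
    have h3 := hdegF v
    have h4 := hsplitdeg v
    linarith
  -- final counting over red components
  have hRb : R ≤ completeBipartiteGraph (Fin n) (Fin n) := hRG.trans hbip
  set m : ℝ := δ * n / 2 with hmdef
  set fib : R.ConnectedComponent → Finset (Fin n ⊕ Fin n) :=
    (fun c => Finset.univ.filter (fun v => R.connectedComponentMk v = c)) with hfibdef
  set pfib : R.ConnectedComponent → Finset (Fin n ⊕ Fin n) :=
    (fun c => PR.filter (fun v => R.connectedComponentMk v = c)) with hpfibdef
  set active : Finset R.ConnectedComponent :=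
    Finset.univ.filter (fun c => (pfib c).Nonempty) with hactivedef
  have hsumPR : PR.card = ∑ c ∈ active, (pfib c).card := by
    have h0 : PR.card = ∑ c : R.ConnectedComponent, (pfib c).card :=
      Finset.card_eq_sum_card_fiberwise (fun v _ => Finset.mem_univ _)
    rw [h0]
    symm
    apply Finset.sum_subset (Finset.subset_univ _)
    intro c _ hc
    rw [hactivedef, Finset.mem_filter] at hc
    push_neg at hc
    rw [Finset.card_eq_zero, ← Finset.not_nonempty_iff_eq_empty]
    exact Finset.not_nonempty_iff_eq_empty.mpr (hc (Finset.mem_univ _))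
  have hn1 : 1 ≤ n := by
    by_contra h
    push_neg at h
    have h0 : n = 0 := by omega
    rw [hmdef, h0] at hn
    norm_num at hn
  have hactivene : active.Nonempty := by
    rw [Finset.nonempty_iff_ne_empty]
    intro h
    rw [h, Finset.sum_empty] at hsumPR
    have := hPRcard.1
    omega
  have hupper : (n : ℝ) < (active.card : ℝ) * m := by
    have h1 : (PR.card : ℝ) = ∑ c ∈ active, ((pfib c).card : ℝ) := by
      rw [hsumPR]; push_cast; ring
    have h2 : ∑ c ∈ active, ((pfib c).card : ℝ) < ∑ _c ∈ active, m :=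
      Finset.sum_lt_sum_of_nonempty hactivene (fun c _ => hPRfib c)
    rw [Finset.sum_const, nsmul_eq_mul] at h2
    have h3 : (PR.card : ℝ) = (n : ℝ) := by exact_mod_cast hPRcard.1
    linarith
  -- the key claim : each active component has many vertices outside PR
  have hclaim : ∀ c ∈ active, m < (((fib c \ PR)).card : ℝ) := by
    intro c hc
    have hcne : (pfib c).Nonempty := (Finset.mem_filter.mp hc).2
    -- side subclaims
    have hsideL : ∀ a : Fin n, Sum.inl a ∈ pfib c →
        m - (((pfib c).filter (fun u => u.isRight = true)).card : ℝ) <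
          (((fib c \ PR).filter (fun u => u.isRight = true)).card : ℝ) := by
      intro a ha
      rw [hpfibdef, Finset.mem_filter] at ha
      obtain ⟨haPR, hac⟩ := ha
      set nb : Finset (Fin n ⊕ Fin n) :=
        Finset.univ.filter (fun u => R.Adj (Sum.inl a) u) with hnbdef
      have hnbsub : nb ⊆ (fib c).filter (fun u => u.isRight = true) := by
        intro u hu
        rw [hnbdef, Finset.mem_filter] at hu
        have hadj := hu.2
        have hur : u.isRight = true := by
          have := hRb hadj
          cases u with
          | inl x => simp [completeBipartiteGraph] at this
          | inr x => simp
        have hcc : R.connectedComponentMk u = c := by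
          rw [← hac]
          exact (SimpleGraph.ConnectedComponent.connectedComponentMk_eq_of_adj hadj).symm
        rw [Finset.mem_filter, hfibdef]
        exact ⟨by simp [hcc], hur⟩
      have hsplit : (nb ∩ PR).card + (nb \ PR).card = nb.card :=
        Finset.card_inter_add_card_sdiff _ _
      have hsub1 : nb ∩ PR ⊆ (pfib c).filter (fun u => u.isRight = true) := by
        intro u hu
        rw [Finset.mem_inter] at hu
        have h1 := hnbsub hu.1
        rw [Finset.mem_filter] at h1
        have h2 : R.connectedComponentMk u = c := by
          have := h1.1
          rw [hfibdef, Finset.mem_filter] at this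
          exact this.2
        rw [Finset.mem_filter, hpfibdef, Finset.mem_filter]
        exact ⟨⟨hu.2, h2⟩, h1.2⟩
      have hsub2 : nb \ PR ⊆ (fib c \ PR).filter (fun u => u.isRight = true) := by
        intro u hu
        rw [Finset.mem_sdiff] at hu
        have h1 := hnbsub hu.1
        rw [Finset.mem_filter] at h1
        rw [Finset.mem_filter, Finset.mem_sdiff]
        exact ⟨⟨h1.1, hu.2⟩, h1.2⟩
      have hdegnb := hRdegbig (Sum.inl a) haPR
      have hc1 : (nb ∩ PR).card ≤ ((pfib c).filter (fun u => u.isRight = true)).card :=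
        Finset.card_le_card hsub1
      have hc2 : (nb \ PR).card ≤ ((fib c \ PR).filter (fun u => u.isRight = true)).card :=
        Finset.card_le_card hsub2
      have e1 : ((nb ∩ PR).card : ℝ) + ((nb \ PR).card : ℝ) = (nb.card : ℝ) := by
        exact_mod_cast hsplit
      have e2 : ((nb ∩ PR).card : ℝ) ≤ (((pfib c).filter (fun u => u.isRight = true)).card : ℝ) := by
        exact_mod_cast hc1
      have e3 : ((nb \ PR).card : ℝ) ≤ (((fib c \ PR).filter (fun u => u.isRight = true)).card : ℝ) := by
        exact_mod_cast hc2
      rw [hmdef]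
      rw [hnbdef] at e1
      linarith [hdegnb]
    have hsideR : ∀ b : Fin n, Sum.inr b ∈ pfib c →
        m - (((pfib c).filter (fun u => u.isLeft = true)).card : ℝ) <
          (((fib c \ PR).filter (fun u => u.isLeft = true)).card : ℝ) := by
      intro b hb
      rw [hpfibdef, Finset.mem_filter] at hb
      obtain ⟨hbPR, hbc⟩ := hb
      set nb : Finset (Fin n ⊕ Fin n) :=
        Finset.univ.filter (fun u => R.Adj (Sum.inr b) u) with hnbdef
      have hnbsub : nb ⊆ (fib c).filter (fun u => u.isLeft = true) := by
        intro u hu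
        rw [hnbdef, Finset.mem_filter] at hu
        have hadj := hu.2
        have hur : u.isLeft = true := by
          have := hRb hadj
          cases u with
          | inl x => simp
          | inr x => simp [completeBipartiteGraph] at this
        have hcc : R.connectedComponentMk u = c := by
          rw [← hbc]
          exact (SimpleGraph.ConnectedComponent.connectedComponentMk_eq_of_adj hadj).symm
        rw [Finset.mem_filter, hfibdef]
        exact ⟨by simp [hcc], hur⟩
      have hsplit : (nb ∩ PR).card + (nb \ PR).card = nb.card :=
        Finset.card_inter_add_card_sdiff _ _
      have hsub1 : nb ∩ PR ⊆ (pfib c).filter (fun u => u.isLeft = true) := by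
        intro u hu
        rw [Finset.mem_inter] at hu
        have h1 := hnbsub hu.1
        rw [Finset.mem_filter] at h1
        have h2 : R.connectedComponentMk u = c := by
          have := h1.1
          rw [hfibdef, Finset.mem_filter] at this
          exact this.2
        rw [Finset.mem_filter, hpfibdef, Finset.mem_filter]
        exact ⟨⟨hu.2, h2⟩, h1.2⟩
      have hsub2 : nb \ PR ⊆ (fib c \ PR).filter (fun u => u.isLeft = true) := by
        intro u hu
        rw [Finset.mem_sdiff] at hu
        have h1 := hnbsub hu.1
        rw [Finset.mem_filter] at h1
        rw [Finset.mem_filter, Finset.mem_sdiff]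
        exact ⟨⟨h1.1, hu.2⟩, h1.2⟩
      have hdegnb := hRdegbig (Sum.inr b) hbPR
      have hc1 : (nb ∩ PR).card ≤ ((pfib c).filter (fun u => u.isLeft = true)).card :=
        Finset.card_le_card hsub1
      have hc2 : (nb \ PR).card ≤ ((fib c \ PR).filter (fun u => u.isLeft = true)).card :=
        Finset.card_le_card hsub2
      have e1 : ((nb ∩ PR).card : ℝ) + ((nb \ PR).card : ℝ) = (nb.card : ℝ) := by
        exact_mod_cast hsplit
      have e2 : ((nb ∩ PR).card : ℝ) ≤ (((pfib c).filter (fun u => u.isLeft = true)).card : ℝ) := by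
        exact_mod_cast hc1
      have e3 : ((nb \ PR).card : ℝ) ≤ (((fib c \ PR).filter (fun u => u.isLeft = true)).card : ℝ) := by
        exact_mod_cast hc2
      rw [hmdef]
      rw [hnbdef] at e1
      linarith [hdegnb]
    -- split cards by side
    have hQsplit : ((fib c \ PR).filter (fun u => u.isRight = true)).card +
        ((fib c \ PR).filter (fun u => u.isLeft = true)).card = (fib c \ PR).card := by
      have h1 : ((fib c \ PR).filter (fun u => u.isLeft = true)) =
          ((fib c \ PR).filter (fun u => ¬ (u.isRight = true))) := by
        apply Finset.filter_congr
        intro u _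
        cases u <;> simp
      rw [h1]
      exact Finset.card_filter_add_card_filter_not _
    have hpsplit : ((pfib c).filter (fun u => u.isRight = true)).card +
        ((pfib c).filter (fun u => u.isLeft = true)).card = (pfib c).card := by
      have h1 : ((pfib c).filter (fun u => u.isLeft = true)) =
          ((pfib c).filter (fun u => ¬ (u.isRight = true))) := by
        apply Finset.filter_congr
        intro u _
        cases u <;> simp
      rw [h1]
      exact Finset.card_filter_add_card_filter_not _
    have hQR0 : (0:ℝ) ≤ (((fib c \ PR).filter (fun u => u.isRight = true)).card : ℝ) := by positivity
    have hQL0 : (0:ℝ) ≤ (((fib c \ PR).filter (fun u => u.isLeft = true)).card : ℝ) := by positivity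
    have heQ : (((fib c \ PR).filter (fun u => u.isRight = true)).card : ℝ) +
        (((fib c \ PR).filter (fun u => u.isLeft = true)).card : ℝ) = ((fib c \ PR).card : ℝ) := by
      exact_mod_cast hQsplit
    have hep : (((pfib c).filter (fun u => u.isRight = true)).card : ℝ) +
        (((pfib c).filter (fun u => u.isLeft = true)).card : ℝ) = ((pfib c).card : ℝ) := by
      exact_mod_cast hpsplit
    have hpm : ((pfib c).card : ℝ) < m := hPRfib c
    obtain ⟨v, hv⟩ := hcne
    by_cases hL : ∃ a : Fin n, Sum.inl a ∈ pfib c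
    · obtain ⟨a, ha⟩ := hL
      have hA := hsideL a ha
      by_cases hRex : ∃ b : Fin n, Sum.inr b ∈ pfib c
      · obtain ⟨b, hb⟩ := hRex
        have hB := hsideR b hb
        linarith
      · push_neg at hRex
        have hpr0 : ((pfib c).filter (fun u => u.isRight = true)) = ∅ := by
          rw [Finset.filter_eq_empty_iff]
          intro u hu
          cases u with
          | inl x => simp
          | inr x => exact absurd hu (hRex x)
        rw [hpr0] at hA
        simp only [Finset.card_empty, Nat.cast_zero, sub_zero] at hA
        linarith
    · push_neg at hL
      cases v with
      | inl a => exact absurd hv (hL a)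
      | inr b =>
        have hB := hsideR b hv
        have hpl0 : ((pfib c).filter (fun u => u.isLeft = true)) = ∅ := by
          rw [Finset.filter_eq_empty_iff]
          intro u hu
          cases u with
          | inl x => exact absurd hu (hL x)
          | inr x => simp
        rw [hpl0] at hB
        simp only [Finset.card_empty, Nat.cast_zero, sub_zero] at hB
        linarith
  -- sum up the claim
  have hlower : (active.card : ℝ) * m < (n : ℝ) := by
    have h1 : ∑ _c ∈ active, m < ∑ c ∈ active, (((fib c \ PR)).card : ℝ) :=
      Finset.sum_lt_sum_of_nonempty hactivene hclaim
    rw [Finset.sum_const, nsmul_eq_mul] at h1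
    have h2 : ∑ c ∈ active, ((fib c \ PR)).card =
        (active.biUnion (fun c => fib c \ PR)).card := by
      symm
      apply Finset.card_biUnion
      intro c _ c' _ hcc
      show Disjoint (fib c \ PR) (fib c' \ PR)
      rw [Finset.disjoint_left]
      intro u hu hu'
      rw [Finset.mem_sdiff, hfibdef, Finset.mem_filter] at hu hu'
      exact hcc (hu.1.2.symm.trans hu'.1.2)
    have h3 : active.biUnion (fun c => fib c \ PR) ⊆ Finset.univ \ PR := by
      intro u hu
      rw [Finset.mem_biUnion] at hu
      obtain ⟨c, _, hc⟩ := hu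
      rw [Finset.mem_sdiff] at hc ⊢
      exact ⟨Finset.mem_univ _, hc.2⟩
    have h4 : (Finset.univ \ PR).card = n := by
      rw [Finset.card_sdiff_of_subset (Finset.subset_univ _), hcard2n, hPRcard.1]
      omega
    have h5 : (active.biUnion (fun c => fib c \ PR)).card ≤ n := by
      exact le_trans (Finset.card_le_card h3) (le_of_eq h4)
    have h6 : ∑ c ∈ active, (((fib c \ PR)).card : ℝ) ≤ (n : ℝ) := by
      have h7 : (∑ c ∈ active, ((fib c \ PR)).card) ≤ n := by rw [h2]; exact h5
      exact_mod_cast h7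
    linarith
  linarith
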